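/- For every b ∈ ℝ, the triple (A1(b), A2(b), A3(b)) is the unique solution (A1, A2, A3) ∈ ℝ³ of the linear system: (i) A1 e^{γ1 b} + A2 e^{γ2 b} + A3 e^{−γ3 b} = r b; (ii) (A1 η/(γ1−η)) e^{γ1 b} + (A2 η/(γ2−η)) e^{γ2 b} − (A3 η/(γ3+η)) e^{−γ3 b} + r(b + 1/η) = 0; (iii) γ1 A1 e^{γ1 b} + γ2 A2 e^{γ2 b} − γ3 A3 e^{−γ3 b} = r. -/

import Mathlib

set_option maxHeartbeats 1000000 in
/-- For every `b`, `(A1 b, A2 b, A3 b)` is the unique solution of the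
linear system (i)-(iii). -/
theorem stmt_3 (η γ1 γ2 γ3 r : ℝ)
    (h1 : 0 < γ1) (h2 : γ1 < η) (h3 : η < γ2) (h4 : 0 < γ3) (hr : 0 < r)
    (A1 A2 A3 : ℝ → ℝ)
    (hA1 : ∀ b : ℝ, A1 b = r / η ^ 2 *
      ((η - γ1) * (γ2 * γ3 * (η * b + 1) + η * (γ2 - γ3)) / ((γ3 + γ1) * (γ2 - γ1))) *
      Real.exp (-γ1 * b))
    (hA2 : ∀ b : ℝ, A2 b = r / η ^ 2 *
      ((γ2 - η) * (γ1 * γ3 * (η * b + 1) + η * (γ1 - γ3)) / ((γ3 + γ2) * (γ2 - γ1))) *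
      Real.exp (-γ2 * b))
    (hA3 : ∀ b : ℝ, A3 b = r / η ^ 2 *
      ((η + γ3) * (γ1 * γ2 * (η * b + 1) - η * (γ1 + γ2)) / ((γ3 + γ1) * (γ2 + γ3))) *
      Real.exp (γ3 * b)) :
    ∀ b x y z : ℝ,
      (x * Real.exp (γ1 * b) + y * Real.exp (γ2 * b) + z * Real.exp (-γ3 * b) = r * b ∧
        x * η / (γ1 - η) * Real.exp (γ1 * b) + y * η / (γ2 - η) * Real.exp (γ2 * b)
          - z * η / (γ3 + η) * Real.exp (-γ3 * b) + r * (b + 1 / η) = 0 ∧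
        γ1 * x * Real.exp (γ1 * b) + γ2 * y * Real.exp (γ2 * b)
          - γ3 * z * Real.exp (-γ3 * b) = r)
      ↔ (x = A1 b ∧ y = A2 b ∧ z = A3 b) := by
  intro b x y z
  have hη : (0:ℝ) < η := h1.trans h2
  have n0 : η ≠ 0 := hη.ne'
  have n1 : γ1 - η ≠ 0 := sub_ne_zero_of_ne h2.ne
  have n2 : γ2 - η ≠ 0 := sub_ne_zero_of_ne h3.ne'
  have n3 : γ3 + η ≠ 0 := ne_of_gt (by linarith)
  have n4 : γ3 + γ1 ≠ 0 := ne_of_gt (by linarith)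
  have n5 : γ2 - γ1 ≠ 0 := sub_ne_zero_of_ne (h2.trans h3).ne'
  have n6 : γ3 + γ2 ≠ 0 := ne_of_gt (by linarith)
  have n7 : γ2 + γ3 ≠ 0 := ne_of_gt (by linarith)
  have hE1 : Real.exp (γ1 * b) ≠ 0 := Real.exp_ne_zero _
  have hE2 : Real.exp (γ2 * b) ≠ 0 := Real.exp_ne_zero _
  have hE3 : Real.exp (γ3 * b) ≠ 0 := Real.exp_ne_zero _
  constructor
  · rintro ⟨e1, e2, e3⟩
    rw [neg_mul, Real.exp_neg] at e1 e2 e3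
    have e1c : x*Real.exp (γ1*b)*Real.exp (γ3*b) + y*Real.exp (γ2*b)*Real.exp (γ3*b) + z
        = r*b*Real.exp (γ3*b) := by
      field_simp at e1
      rw [mul_comm b γ2, mul_comm b γ3] at e1
      linear_combination e1
    have e3c : γ1*x*Real.exp (γ1*b)*Real.exp (γ3*b) + γ2*y*Real.exp (γ2*b)*Real.exp (γ3*b)
        - γ3*z = r*Real.exp (γ3*b) := by
      field_simp at e3
      rw [mul_comm b γ2, mul_comm b γ3] at e3
      linear_combination e3
    have e2c : η^2*(γ2-η)*(γ3+η)*(x*Real.exp (γ1*b)*Real.exp (γ3*b))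
        + η^2*(γ1-η)*(γ3+η)*(y*Real.exp (γ2*b)*Real.exp (γ3*b))
        - η^2*(γ1-η)*(γ2-η)*z
        + r*(η*b+1)*(γ1-η)*(γ2-η)*(γ3+η)*Real.exp (γ3*b) = 0 := by
      field_simp at e2
      rw [mul_comm b γ2, mul_comm b γ3] at e2
      linear_combination e2
    have hX : η^2*(γ3+γ1)*(γ2-γ1)*(x*Real.exp (γ1*b))
        = r*(η-γ1)*(γ2*γ3*(η*b+1)+η*(γ2-γ3)) := by
      refine mul_right_cancel₀ hE3 ?_
      linear_combination e2c + η^2*(γ1-η)*(γ2-η-γ3)*e1c - η^2*(γ1-η)*e3c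
    have hY : η^2*(γ3+γ2)*(γ2-γ1)*(y*Real.exp (γ2*b))
        = r*(γ2-η)*(γ1*γ3*(η*b+1)+η*(γ1-γ3)) := by
      refine mul_right_cancel₀ hE3 ?_
      linear_combination -e2c - η^2*(γ2-η)*(γ1-η-γ3)*e1c + η^2*(γ2-η)*e3c
    have hZ : η^2*(γ3+γ1)*(γ2+γ3)*z
        = r*(η+γ3)*(γ1*γ2*(η*b+1)-η*(γ1+γ2))*Real.exp (γ3*b) := by
      linear_combination -e2c + η^2*(γ3+η)*(γ2-η+γ1)*e1c - η^2*(γ3+η)*e3c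
    refine ⟨?_, ?_, ?_⟩
    · rw [hA1, neg_mul, Real.exp_neg]
      field_simp
      linear_combination hX
    · rw [hA2, neg_mul, Real.exp_neg]
      field_simp
      linear_combination hY
    · rw [hA3]
      field_simp
      linear_combination hZ
  · rintro ⟨rfl, rfl, rfl⟩
    rw [hA1, hA2, hA3]
    refine ⟨?_, ?_, ?_⟩ <;>
    · simp only [neg_mul, Real.exp_neg]
      field_simp
      ring
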